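/- Let M be a conditional oriented matroid on I, F a flat with basic set B, and X a circuit of the contraction M^F. Then the monomial ∏_{b∈B} z_b · ∏_{i∈Supp(X)} y_i^{X(i)} lies in the vanishing ideal I(Z_M) of the big locus (hence in gr I(Z_M), being homogeneous). -/

import Mathlib

/-- The composition `X ∘ Y` of signed subsets of `I`. -/
def scomp {I : Type*} (X Y : I → SignType) : I → SignType :=
  fun i => if X i ≠ 0 then X i else Y i

/-- The separating set of two signed subsets. -/
def sepSet {I : Type*} (X Y : I → SignType) : Set I :=
  {i | X i = -(Y i) ∧ X i ≠ 0}

/-- A conditional oriented matroid on the ground set `I`. -/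
structure IsCOM {I : Type*} (M : Set (I → SignType)) : Prop where
  faceSym : ∀ X ∈ M, ∀ Y ∈ M, scomp X (-Y) ∈ M
  strongElim : ∀ X ∈ M, ∀ Y ∈ M, ∀ i ∈ sepSet X Y,
    ∃ Z ∈ M, Z i = 0 ∧ ∀ j ∉ sepSet X Y, Z j = scomp X Y j

/-- The flat (zero set) of a covector. -/
def sflat {I : Type*} (X : I → SignType) : Set I := {i | X i = 0}

/-- The collection of flats of a conditional oriented matroid. -/
def flats {I : Type*} (M : Set (I → SignType)) : Set (Set I) :=
  {F | ∃ X ∈ M, sflat X = F}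

/-- `F` is the minimal flat of `M` containing `C` (the closure `C̄` of `C`). -/
def minimalFlatOf {I : Type*} (M : Set (I → SignType)) (C F : Set I) : Prop :=
  F ∈ flats M ∧ C ⊆ F ∧ ∀ F' ∈ flats M, C ⊆ F' → F ⊆ F'

/-- `B` is basic for the flat `F`: the closure of `B` is `F` and no proper
subset of `B` has closure `F`. -/
def IsBasic {I : Type*} (M : Set (I → SignType)) (B : Finset I) (F : Set I) : Prop :=
  minimalFlatOf M (B : Set I) F ∧
    ∀ B' ⊆ B, minimalFlatOf M (B' : Set I) F → B' = B

/-- The 0/1 point `z_X ∈ K^{I × {+,-,0}}` attached to a covector `X`. -/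
def bigPoint (K : Type*) [Field K] {I : Type*} (X : I → SignType) :
    I × SignType → K :=
  fun p => if X p.1 = p.2 then 1 else 0

/-- The big locus `Z_M ⊆ K^{I × {+,-,0}}` of a conditional oriented matroid. -/
def bigLocus (K : Type*) [Field K] {I : Type*} (M : Set (I → SignType)) :
    Set (I × SignType → K) :=
  (fun X => bigPoint K X) '' M

/-- The vanishing ideal of a set of points of `K^σ`. -/
noncomputable def vanishingIdeal (K : Type*) [Field K] {σ : Type*} (Z : Set (σ → K)) :
    Ideal (MvPolynomial σ K) :=
  ⨅ z ∈ Z, RingHom.ker (MvPolynomial.eval z)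

/-- The associated graded ideal `gr I(Z)`, generated by the top-degree
homogeneous components of the nonzero elements of `I(Z)`. -/
noncomputable def grIdeal (K : Type*) [Field K] {σ : Type*} (Z : Set (σ → K)) :
    Ideal (MvPolynomial σ K) :=
  Ideal.span {g | ∃ f ∈ vanishingIdeal K Z, f ≠ 0 ∧
    g = MvPolynomial.homogeneousComponent f.totalDegree f}

/-- `X` is (a representative on `I` of) a circuit of the contraction `M^F`:
`X` vanishes on `F`; for every covector `Y` of `M` vanishing on `F` the
compositions `X ∘ Y` and `Y` differ somewhere outside `F`; and every proper
signed subset `Z` of `X` composes trivially with some covector of `M^F`. -/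
def IsCtrCircuit {I : Type*} (M : Set (I → SignType)) (F : Set I)
    (X : I → SignType) : Prop :=
  (∀ i ∈ F, X i = 0) ∧
  (∀ Y ∈ M, (∀ j ∈ F, Y j = 0) → ∃ i ∉ F, scomp X Y i ≠ Y i) ∧
  (∀ Z : I → SignType, (∀ i, Z i = 0 ∨ Z i = X i) → Z ≠ X →
    ∃ Y₀ ∈ M, (∀ j ∈ F, Y₀ j = 0) ∧ ∀ i ∉ F, scomp Z Y₀ i = Y₀ i)

open MvPolynomial

/-- if `B` is a basic set for a flat `F` and `X` is a circuit of
the contraction `M^F`, then `∏_{b∈B} z_b · ∏_{i∈Supp(X)} y_i^{X(i)}` lies in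
the vanishing ideal `I(Z_M)` of the big locus, hence (being homogeneous) in
`gr I(Z_M)`. -/
theorem basic_times_circuit_in_gr (K : Type*) [Field K] {I : Type*} [Fintype I]
    [DecidableEq I] {M : Set (I → SignType)} (hM : IsCOM M)
    (B : Finset I) (F : Set I) (hB : IsBasic M B F)
    (Xc : I → SignType) (hXc : IsCtrCircuit M F Xc) :
    ((∏ b ∈ B, X (b, (0 : SignType))) *
        ∏ i ∈ Finset.univ.filter (fun i => Xc i ≠ 0), X (i, Xc i)
      ∈ _root_.vanishingIdeal K (bigLocus K M)) ∧
    ((∏ b ∈ B, X (b, (0 : SignType))) *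
        ∏ i ∈ Finset.univ.filter (fun i => Xc i ≠ 0), X (i, Xc i)
      ∈ grIdeal K (bigLocus K M)) := by
  set f : MvPolynomial (I × SignType) K :=
    (∏ b ∈ B, X (b, (0 : SignType))) *
      ∏ i ∈ Finset.univ.filter (fun i => Xc i ≠ 0), X (i, Xc i) with hf
  have hmem : f ∈ _root_.vanishingIdeal K (bigLocus K M) := by
    rw [show _root_.vanishingIdeal K (bigLocus K M) = ⨅ z ∈ bigLocus K M, RingHom.ker (MvPolynomial.eval z) from rfl]
    simp only [Ideal.mem_iInf]
    rintro z ⟨Y, hY, rfl⟩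
    rw [RingHom.mem_ker]
    by_contra h0
    rw [hf, map_mul, map_prod, map_prod] at h0
    simp only [eval_X, mul_ne_zero_iff] at h0
    obtain ⟨h1, h2⟩ := h0
    rw [Finset.prod_ne_zero_iff] at h1
    rw [Finset.prod_ne_zero_iff] at h2
    -- Y vanishes on B
    have hYB : ∀ b ∈ B, Y b = 0 := by
      intro b hb
      have := h1 b hb
      simp only [bigPoint] at this
      by_contra hne
      simp [hne] at this
    -- Y agrees with Xc on the support of Xc
    have hYX : ∀ i, Xc i ≠ 0 → Y i = Xc i := by
      intro i hi
      have := h2 i (by simp [hi])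
      simp only [bigPoint] at this
      by_contra hne
      simp [hne] at this
    -- Y vanishes on F
    have hYF : ∀ j ∈ F, Y j = 0 := by
      have hflat : sflat Y ∈ flats M := ⟨Y, hY, rfl⟩
      have hBsub : (B : Set I) ⊆ sflat Y := fun b hb => hYB b hb
      have := hB.1.2.2 (sflat Y) hflat hBsub
      exact fun j hj => this hj
    obtain ⟨i, hiF, hi⟩ := hXc.2.1 Y hY hYF
    apply hi
    unfold scomp
    by_cases hx : Xc i = 0
    · simp [hx]
    · simp only [hx, ne_eq, not_false_eq_true, if_pos]
      exact (hYX i hx).symm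
  refine ⟨hmem, ?_⟩
  have hne : f ≠ 0 := by
    rw [hf]
    apply mul_ne_zero <;>
    · rw [Finset.prod_ne_zero_iff]
      intro i _
      exact X_ne_zero _
  have hhom : f ∈ homogeneousSubmodule (I × SignType) K
      (B.card + (Finset.univ.filter (fun i => Xc i ≠ 0)).card) := by
    rw [mem_homogeneousSubmodule, hf]
    apply IsHomogeneous.mul
    · have := IsHomogeneous.prod B (fun b => (X (b, (0 : SignType)) : MvPolynomial (I × SignType) K))
        (fun _ => 1) (fun b _ => isHomogeneous_X K _)
      simpa using this
    · have := IsHomogeneous.prod (Finset.univ.filter (fun i => Xc i ≠ 0))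
        (fun i => (X (i, Xc i) : MvPolynomial (I × SignType) K))
        (fun _ => 1) (fun i _ => isHomogeneous_X K _)
      simpa using this
  apply Ideal.subset_span
  refine ⟨f, hmem, hne, ?_⟩
  have htd : f.totalDegree = B.card + (Finset.univ.filter (fun i => Xc i ≠ 0)).card :=
    ((mem_homogeneousSubmodule _ _).1 hhom).totalDegree hne
  rw [htd, homogeneousComponent_of_mem hhom, if_pos rfl]
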